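/- Cayley–Hamilton for quaternionic operators: if φ is an ℍ-linear operator on a finite-dimensional right ℍ-vector space V and p(x) ∈ ℝ[x] is the characteristic polynomial of the induced ℂ-linear operator φ₀ on V₀, then p(φ) = 0 in End_ℍ(V). -/
import Mathlib


open scoped Quaternion
open MulOpposite

/-- The standard embedding `ℂ →+* ℍᵐᵒᵖ` (the complex numbers commute in `ℍ`). -/
noncomputable def toQop : ℂ →+* (ℍ[ℝ])ᵐᵒᵖ :=
  RingHom.toOpposite Quaternion.ofComplex.toRingHom
    (fun x y => by
      change Commute (Quaternion.ofComplex x) (Quaternion.ofComplex y)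
      rw [Commute, SemiconjBy, ← map_mul, ← map_mul, mul_comm])

/-- `V` viewed as a complex vector space by restriction of scalars along `ℂ ⊆ ℍ`. -/
noncomputable instance restrictC (V : Type*) [AddCommGroup V] [Module (ℍ[ℝ])ᵐᵒᵖ V] :
    Module ℂ V :=
  Module.compHom V toQop

/-- Cayley–Hamilton over ℍ: if `p ∈ ℝ[x]` is the characteristic
polynomial of the ℂ-linear operator `φ₀` induced on `V₀` by the ℍ-linear operator `φ`,
then `p(φ) = 0` in `End_ℍ(V)`, i.e. `Σₖ (φ^k v)·pₖ = 0` for every `v`. -/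
theorem cayley_hamilton_quaternionic (V : Type*) [AddCommGroup V]
    [Module (ℍ[ℝ])ᵐᵒᵖ V] [FiniteDimensional (ℍ[ℝ])ᵐᵒᵖ V] [FiniteDimensional ℂ V]
    (φ : Module.End (ℍ[ℝ])ᵐᵒᵖ V) (φ₀ : Module.End ℂ V) (hφ : ∀ v, φ₀ v = φ v)
    (p : Polynomial ℝ) (hp : p.map (algebraMap ℝ ℂ) = LinearMap.charpoly φ₀) :
    ∀ v : V, p.sum (fun k a => op ((a : ℍ[ℝ])) • ((φ ^ k) v)) = 0 := by
  intro v
  have hpow : ∀ k (w : V), (φ₀ ^ k) w = (φ ^ k) w := by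
    intro k
    induction k with
    | zero => intro w; rfl
    | succ n ih =>
      intro w
      rw [pow_succ, pow_succ, Module.End.mul_apply, Module.End.mul_apply, hφ, ih]
  have hCH : (Polynomial.aeval φ₀) (LinearMap.charpoly φ₀) = 0 :=
    LinearMap.aeval_self_charpoly φ₀
  rw [← hp] at hCH
  have h0 : (Polynomial.aeval φ₀ (p.map (algebraMap ℝ ℂ))) v = 0 := by rw [hCH]; rfl
  rw [Polynomial.aeval_endomorphism, Polynomial.sum_def,
    Polynomial.support_map_of_injective p (algebraMap ℝ ℂ).injective] at h0
  rw [Polynomial.sum_def, ← h0]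
  refine Finset.sum_congr rfl fun n _ => ?_
  rw [Polynomial.coeff_map, hpow]
  show op ((p.coeff n : ℍ[ℝ])) • ((φ ^ n) v) = toQop (algebraMap ℝ ℂ (p.coeff n)) • ((φ ^ n) v)
  congr 1
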